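/- Let φ : ℝ → ℝ be a C², 2π-periodic solution of φ̈(τ) + |φ(τ)|^{1/2}φ(τ) = 0 with minimal period 2π, odd, with φ(0) = 0 and φ̇(0) > 0. Then ∫₀^{π} (φ̈(τ))² dτ > (2/π)(φ̇(0))². -/

import Mathlib

open Real

lemma abs_rpow_half_eq (x : ℝ) : |x| ^ ((1:ℝ)/2) = (x^2) ^ ((1:ℝ)/4) := by
  rw [← sq_abs x, ← Real.rpow_natCast |x| 2, ← Real.rpow_mul (abs_nonneg x)]
  norm_num

lemma hasDerivAt_P (x : ℝ) :
    HasDerivAt (fun y : ℝ => (2/5) * (y^2) ^ ((5:ℝ)/4)) (|x| ^ ((1:ℝ)/2) * x) x := by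
  have h1 : HasDerivAt (fun y : ℝ => (y^2) ^ ((5:ℝ)/4))
      (((5:ℝ)/4) * (x^2) ^ ((5:ℝ)/4 - 1) * (2 * x)) x := by
    have hsq : HasDerivAt (fun y : ℝ => y^2) (2*x) x := by simpa using hasDerivAt_pow 2 x
    have := hsq.rpow_const (p := (5:ℝ)/4) (Or.inr (by norm_num))
    convert this using 1
    ring
  have := h1.const_mul (2/5 : ℝ)
  refine this.congr_deriv ?_
  rw [abs_rpow_half_eq]
  norm_num
  ring

lemma hasDerivAt_g (x : ℝ) :
    HasDerivAt (fun y : ℝ => |y| ^ ((1:ℝ)/2) * y) ((3/2) * |x| ^ ((1:ℝ)/2)) x := by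
  rcases eq_or_ne x 0 with rfl | hx
  · -- at 0 : derivative is 0
    have h0 : (3/2 : ℝ) * |(0:ℝ)| ^ ((1:ℝ)/2) = 0 := by
      simp [Real.zero_rpow (by norm_num : (1:ℝ)/2 ≠ 0)]
    rw [h0, hasDerivAt_iff_tendsto_slope]
    have heq : ∀ᶠ y in nhdsWithin (0:ℝ) {(0:ℝ)}ᶜ,
        slope (fun y : ℝ => |y| ^ ((1:ℝ)/2) * y) 0 y = |y| ^ ((1:ℝ)/2) := by
      filter_upwards [self_mem_nhdsWithin] with y hy
      have hy' : y ≠ 0 := hy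
      simp [slope_def_field, Real.zero_rpow (by norm_num : (1:ℝ)/2 ≠ 0)]
      field_simp
    rw [Filter.tendsto_congr' heq]
    have : Filter.Tendsto (fun y : ℝ => |y| ^ ((1:ℝ)/2)) (nhds 0) (nhds (|(0:ℝ)| ^ ((1:ℝ)/2))) := by
      apply ContinuousAt.tendsto
      exact (Real.continuousAt_rpow_const _ _ (Or.inr (by norm_num))).comp continuous_abs.continuousAt
    have h00 : |(0:ℝ)| ^ ((1:ℝ)/2) = 0 := by
      simp [Real.zero_rpow (by norm_num : (1:ℝ)/2 ≠ 0)]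
    rw [h00] at this
    exact this.mono_left nhdsWithin_le_nhds
  · -- at x ≠ 0
    have hx2 : x^2 ≠ 0 := pow_ne_zero 2 hx
    have hsq : HasDerivAt (fun y : ℝ => y^2) (2*x) x := by simpa using hasDerivAt_pow 2 x
    have h1 : HasDerivAt (fun y : ℝ => (y^2) ^ ((1:ℝ)/4))
        (((1:ℝ)/4) * (x^2) ^ ((1:ℝ)/4 - 1) * (2 * x)) x := by
      have := hsq.rpow_const (p := (1:ℝ)/4) (Or.inl hx2)
      convert this using 1
      ring
    have h2 := h1.mul (hasDerivAt_id x)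
    have hfun : (fun y : ℝ => |y| ^ ((1:ℝ)/2) * y) = fun y : ℝ => (y^2) ^ ((1:ℝ)/4) * y := by
      funext y; rw [abs_rpow_half_eq]
    rw [hfun, abs_rpow_half_eq]
    refine h2.congr_deriv (Eq.symm ?_)
    have hpos : (0:ℝ) < x^2 := lt_of_le_of_ne (sq_nonneg x) (Ne.symm hx2)
    have key : (x^2) ^ ((1:ℝ)/4 - 1) * x^2 = (x^2) ^ ((1:ℝ)/4) := by
      nth_rewrite 2 [← Real.rpow_one (x^2)]
      rw [← Real.rpow_add hpos]
      norm_num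
    simp only [id_eq]
    linear_combination (-1/2 : ℝ) * key

theorem key_inequality_lemma3
    (φ : ℝ → ℝ) (hφ : ContDiff ℝ 2 φ)
    (hode : ∀ τ, deriv (deriv φ) τ + |φ τ| ^ ((1:ℝ)/2) * φ τ = 0)
    (hper : Function.Periodic φ (2 * π))
    (hmin : ∀ p, 0 < p → Function.Periodic φ p → 2 * π ≤ p)
    (hodd : ∀ τ, φ (-τ) = -φ τ)
    (h0 : φ 0 = 0) (h0' : 0 < deriv φ 0) :
    (2/π) * (deriv φ 0) ^ 2 < ∫ τ in (0:ℝ)..π, (deriv (deriv φ) τ) ^ 2 := by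
  have hπ : (0:ℝ) < π := pi_pos
  set v : ℝ := deriv φ 0 with hv
  -- regularity
  have hd1 : Differentiable ℝ φ := hφ.differentiable (by norm_num)
  have h21 : ContDiff ℝ 1 (deriv φ) := by
    have := (contDiff_succ_iff_deriv (n := 1)).mp (by exact_mod_cast hφ)
    exact this.2.2
  have hd2 : Differentiable ℝ (deriv φ) := h21.differentiable (by norm_num)
  have hc3 : Continuous (deriv (deriv φ)) := (contDiff_one_iff_deriv.mp h21).2
  -- φ π = 0
  have hφπ : φ π = 0 := by
    have h1 : φ (-π + 2*π) = φ (-π) := hper (-π)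
    have h2 : φ (-π) = -φ π := hodd π
    have h3 : -π + 2*π = π := by ring
    rw [h3, h2] at h1
    linarith
  -- energy conservation
  have hEconst : ∀ a b : ℝ, (deriv φ a)^2/2 + (2/5)*((φ a)^2)^((5:ℝ)/4)
      = (deriv φ b)^2/2 + (2/5)*((φ b)^2)^((5:ℝ)/4) := by
    have hEd : ∀ τ, HasDerivAt
        (fun t => (deriv φ t)^2/2 + (2/5)*((φ t)^2)^((5:ℝ)/4)) 0 τ := by
      intro τ
      have h1 : HasDerivAt φ (deriv φ τ) τ := (hd1 τ).hasDerivAt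
      have h2 : HasDerivAt (deriv φ) (deriv (deriv φ) τ) τ := (hd2 τ).hasDerivAt
      have hsq : HasDerivAt (fun t => (deriv φ t)^2/2)
          (deriv φ τ * deriv (deriv φ) τ) τ := by
        have := (h2.pow 2).div_const 2
        refine this.congr_deriv ?_
        push_cast
        ring
      have hP : HasDerivAt (fun t => (2/5)*((φ t)^2)^((5:ℝ)/4))
          (|φ τ| ^ ((1:ℝ)/2) * φ τ * deriv φ τ) τ :=
        (hasDerivAt_P (φ τ)).comp τ h1
      have := hsq.add hP
      refine this.congr_deriv (Eq.symm ?_)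
      have h3 := hode τ
      linear_combination (-(deriv φ τ)) * h3
    intro a b
    exact is_const_of_deriv_eq_zero (fun τ => (hEd τ).differentiableAt)
      (fun τ => (hEd τ).deriv) a b
  have hsqeq : (deriv φ π)^2 = v^2 := by
    have := hEconst π 0
    rw [hφπ, h0] at this
    have h00 : ((0:ℝ)^2)^((5:ℝ)/4) = 0 := by norm_num
    rw [h00] at this
    linarith
  -- uniqueness: deriv φ π ≠ v
  have hne : deriv φ π ≠ v := by
    intro heq
    set F : ℝ × ℝ → ℝ × ℝ := fun p => (p.2, -(|p.1| ^ ((1:ℝ)/2) * p.1)) with hF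
    set f : ℝ → ℝ × ℝ := fun t => (φ t, deriv φ t) with hfdef
    have hfd : ∀ t, HasDerivAt f (F (f t)) t := by
      intro t
      have h1 : HasDerivAt φ (deriv φ t) t := (hd1 t).hasDerivAt
      have h2 : HasDerivAt (deriv φ) (deriv (deriv φ) t) t := (hd2 t).hasDerivAt
      have h3 : deriv (deriv φ) t = -(|φ t| ^ ((1:ℝ)/2) * φ t) := by linarith [hode t]
      have := HasDerivAt.prodMk h1 h2
      rw [h3] at this
      exact this
    have hcont : Continuous f := hd1.continuous.prodMk hd2.continuous
    have hperd : Function.Periodic (deriv φ) (2*π) := by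
      intro t
      have hfun : (fun x => φ (x + 2*π)) = φ := funext hper
      conv_rhs => rw [← hfun]
      rw [deriv_comp_add_const]
    have hfper : Function.Periodic f (2*π) := by
      intro t
      simp only [hfdef, hper t, hperd t]
    obtain ⟨R0, hR0⟩ : ∃ R, f '' Set.Icc 0 (0 + 2*π) ⊆ Metric.closedBall (0:ℝ×ℝ) R :=
      (isCompact_Icc.image hcont).isBounded.subset_closedBall (0:ℝ×ℝ)
    set R : ℝ := max R0 0 with hRdef
    have hR : ∀ t, f t ∈ Metric.closedBall (0:ℝ×ℝ) R := by
      intro t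
      apply Metric.closedBall_subset_closedBall (le_max_left R0 0)
      apply hR0
      rw [hfper.image_Icc (by positivity) 0]
      exact Set.mem_range_self t
    set C : ℝ := (3/2) * R ^ ((1:ℝ)/2) with hCdef
    have hC0 : 0 ≤ C := by positivity
    -- Lipschitz estimate for the nonlinearity on [-R, R]
    have hgl : ∀ x ∈ Set.Icc (-R) R, ∀ y ∈ Set.Icc (-R) R,
        ‖(|y| ^ ((1:ℝ)/2) * y) - (|x| ^ ((1:ℝ)/2) * x)‖ ≤ C * ‖y - x‖ := by
      intro x hx y hy
      refine (convex_Icc (-R) R).norm_image_sub_le_of_norm_hasDerivWithin_le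
        (f' := fun z => (3/2) * |z| ^ ((1:ℝ)/2))
        (fun z _ => (hasDerivAt_g z).hasDerivWithinAt) ?_ hx hy
      intro z hz
      have hz' : |z| ≤ R := abs_le.mpr ⟨hz.1, hz.2⟩
      have h1 : |z| ^ ((1:ℝ)/2) ≤ R ^ ((1:ℝ)/2) :=
        Real.rpow_le_rpow (abs_nonneg z) hz' (by norm_num)
      rw [Real.norm_eq_abs, abs_of_nonneg (by positivity)]
      rw [hCdef]
      linarith
    set K : NNReal := ⟨max 1 C, le_trans zero_le_one (le_max_left _ _)⟩ with hKdef
    have hFlip : LipschitzOnWith K F (Metric.closedBall (0:ℝ×ℝ) R) := by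
      rw [lipschitzOnWith_iff_dist_le_mul]
      intro p hp q hq
      have hp1 : p.1 ∈ Set.Icc (-R) R := by
        have : ‖p.1‖ ≤ R := le_trans (norm_fst_le p) (mem_closedBall_zero_iff.mp hp)
        rw [Real.norm_eq_abs] at this
        exact ⟨neg_le_of_abs_le this, le_of_abs_le this⟩
      have hq1 : q.1 ∈ Set.Icc (-R) R := by
        have : ‖q.1‖ ≤ R := le_trans (norm_fst_le q) (mem_closedBall_zero_iff.mp hq)
        rw [Real.norm_eq_abs] at this
        exact ⟨neg_le_of_abs_le this, le_of_abs_le this⟩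
      have hd : dist p q = max (dist p.1 q.1) (dist p.2 q.2) := Prod.dist_eq
      have hdF : dist (F p) (F q)
          = max (dist p.2 q.2) (dist (-(|p.1| ^ ((1:ℝ)/2) * p.1)) (-(|q.1| ^ ((1:ℝ)/2) * q.1))) :=
        Prod.dist_eq
      rw [hdF, hd]
      have hK1 : (1:ℝ) ≤ (K:ℝ) := le_max_left 1 C
      have hKC : C ≤ (K:ℝ) := le_max_right 1 C
      have hKnn : (0:ℝ) ≤ (K:ℝ) := le_trans zero_le_one hK1
      apply max_le
      · calc dist p.2 q.2 ≤ max (dist p.1 q.1) (dist p.2 q.2) := le_max_right _ _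
          _ = 1 * max (dist p.1 q.1) (dist p.2 q.2) := (one_mul _).symm
          _ ≤ (K:ℝ) * max (dist p.1 q.1) (dist p.2 q.2) := by
              apply mul_le_mul_of_nonneg_right hK1 (le_max_of_le_left dist_nonneg)
      · rw [dist_neg_neg, dist_eq_norm]
        calc ‖(|p.1| ^ ((1:ℝ)/2) * p.1) - (|q.1| ^ ((1:ℝ)/2) * q.1)‖
            ≤ C * ‖p.1 - q.1‖ := hgl q.1 hq1 p.1 hp1
          _ = C * dist p.1 q.1 := by rw [dist_eq_norm]
          _ ≤ (K:ℝ) * max (dist p.1 q.1) (dist p.2 q.2) := by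
              apply mul_le_mul hKC (le_max_left _ _) dist_nonneg hKnn
    -- uniqueness of solutions: f (t + π) = f t for t ≥ 0
    have huniq : ∀ t : ℝ, 0 ≤ t → f (t + π) = f t := by
      intro t ht
      have heqon := ODE_solution_unique_of_mem_Icc_right
        (v := fun _ : ℝ => F) (s := fun _ : ℝ => Metric.closedBall (0:ℝ×ℝ) R)
        (K := K) (fun _ _ => hFlip)
        (f := f) (g := fun τ => f (τ + π)) (a := 0) (b := t)
        (hcont.continuousOn)
        (fun τ _ => (hfd τ).hasDerivWithinAt)
        (fun τ _ => hR τ)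
        ((hcont.comp (continuous_add_right π)).continuousOn)
        (fun τ _ => ((hfd (τ + π)).comp_add_const τ π).hasDerivWithinAt)
        (fun τ _ => hR (τ + π))
        ?_
      · have := heqon (Set.right_mem_Icc.mpr ht)
        exact this.symm
      · show f 0 = f (0 + π)
        rw [zero_add]
        simp only [hfdef]
        rw [h0, hφπ, heq]
    -- φ is π-periodic, contradiction with minimality
    have hperπ : Function.Periodic φ π := by
      intro t
      obtain ⟨n, hn⟩ := exists_nat_ge (-t / (2*π))
      have ht' : 0 ≤ t + n*(2*π) := by
        rw [div_le_iff₀ (by positivity)] at hn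
        linarith
      have h1 := huniq (t + n*(2*π)) ht'
      have h1' : φ (t + n*(2*π) + π) = φ (t + n*(2*π)) := congrArg Prod.fst h1
      have ha : φ (t + n*(2*π) + π) = φ (t + π) := by
        have := (hper.nat_mul n) (t + π)
        rw [show t + (n:ℝ)*(2*π) + π = t + π + n*(2*π) by ring]
        exact this
      have hb : φ (t + n*(2*π)) = φ t := (hper.nat_mul n) t
      rw [ha, hb] at h1'
      exact h1'
    have := hmin π hπ hperπ
    linarith
  have hneg : deriv φ π = -v := by
    have hfac : (deriv φ π - v) * (deriv φ π + v) = 0 := by nlinarith [hsqeq]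
    rcases mul_eq_zero.mp hfac with h | h
    · exact absurd (by linarith) hne
    · linarith
  -- FTC
  have hFTC : ∫ τ in (0:ℝ)..π, deriv (deriv φ) τ = -2*v := by
    rw [intervalIntegral.integral_deriv_eq_sub (fun x _ => hd2 x)
      (hc3.intervalIntegrable 0 π)]
    rw [hneg]; ring
  -- Cauchy-Schwarz via nonnegativity
  have hint1 : IntervalIntegrable (fun τ => (deriv (deriv φ) τ)^2) MeasureTheory.volume 0 π :=
    ((hc3.pow 2).intervalIntegrable 0 π)
  have hkey : 0 ≤ ∫ τ in (0:ℝ)..π, (deriv (deriv φ) τ + 2*v/π)^2 :=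
    intervalIntegral.integral_nonneg hπ.le (fun x _ => sq_nonneg _)
  have hexp : ∫ τ in (0:ℝ)..π, (deriv (deriv φ) τ + 2*v/π)^2
      = (∫ τ in (0:ℝ)..π, (deriv (deriv φ) τ)^2) + (4*v/π) * (-2*v) + (2*v/π)^2 * π := by
    have e1 : ∀ τ, (deriv (deriv φ) τ + 2*v/π)^2
        = (deriv (deriv φ) τ)^2 + (4*v/π) * (deriv (deriv φ) τ) + (2*v/π)^2 := by
      intro τ; field_simp; ring
    simp_rw [e1]
    rw [intervalIntegral.integral_add (f := fun τ => (deriv (deriv φ) τ)^2 + (4*v/π) * (deriv (deriv φ) τ)) (g := fun _ => (2*v/π)^2) (((hc3.pow 2).intervalIntegrable 0 π).add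
          (((continuous_const.mul hc3).intervalIntegrable 0 π)))
        (intervalIntegrable_const), intervalIntegral.integral_add (f := fun τ => (deriv (deriv φ) τ)^2) (g := fun τ => (4*v/π) * (deriv (deriv φ) τ))
          ((hc3.pow 2).intervalIntegrable 0 π) ((continuous_const.mul hc3).intervalIntegrable 0 π),
        intervalIntegral.integral_const_mul, hFTC, intervalIntegral.integral_const]
    simp [smul_eq_mul]
    ring
  rw [hexp] at hkey
  have harith : (4*v/π) * (-2*v) + (2*v/π)^2 * π = -(4*v^2/π) := by field_simp; ring
  have hpos2 : 0 < 2*v^2/π := by positivity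
  have hsplit : 4*v^2/π = 2/π*v^2 + 2*v^2/π := by ring
  linarith
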